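/- Let A ⊆ ℕ and let b ≥ 2 be an integer that is coprime to every element of A. Then the set T of all even subpowers of b is {A, {b}}-multiplicative; moreover T has density b/(b+1), and if A contains some element a with a < b then every {A, {b}}-multiplicative set S satisfies limsup_{n→∞} |S ∩ {1,...,n}|/n ≤ b/(b+1). -/

import Mathlib

/-- `S` is `{A,B}`-multiplicative: `a*x = b*y` implies `a = b` and `x = y`
for all `a ∈ A`, `b ∈ B`, `x, y ∈ S`. -/
def MulSidonSets (A B : Set ℕ) (S : Set ℕ) : Prop :=
  ∀ a ∈ A, ∀ b ∈ B, ∀ x ∈ S, ∀ y ∈ S, a * x = b * y → a = b ∧ x = y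

/-- `x` is an `i`-th subpower of `b`: `x = b^i * y` for some `y ≥ 1` with `b ∤ y`. -/
def IsSubpower (b i x : ℕ) : Prop :=
  ∃ y : ℕ, 0 < y ∧ ¬ b ∣ y ∧ x = b ^ i * y

/-- `x` is an even subpower of `b`. -/
def IsEvenSubpower (b x : ℕ) : Prop :=
  ∃ i : ℕ, Even i ∧ IsSubpower b i x

attribute [local instance] Classical.propDecidable

lemma subpow_exists (b : ℕ) (hb : 2 ≤ b) (x : ℕ) : 0 < x → ∃ i, IsSubpower b i x := by
  induction x using Nat.strong_induction_on with
  | _ x ih =>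
    intro hx
    by_cases h : b ∣ x
    · obtain ⟨z, rfl⟩ := h
      have hz : 0 < z := Nat.pos_of_ne_zero (by rintro rfl; simp at hx)
      have hlt : z < b * z := by nlinarith
      obtain ⟨i, y, hy, hby, hzy⟩ := ih z hlt hz
      exact ⟨i + 1, y, hy, hby, by rw [hzy, pow_succ]; ring⟩
    · exact ⟨0, x, hx, h, by simp⟩

lemma subpow_unique_aux (b : ℕ) (hb : 2 ≤ b) {i j y z : ℕ} (hij : i ≤ j)
    (hy : ¬ b ∣ y) (hz : ¬ b ∣ z) (h : b ^ i * y = b ^ j * z) : i = j ∧ y = z := by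
  have hbp : 0 < b ^ i := Nat.pow_pos (by omega)
  have hj : b ^ j = b ^ i * b ^ (j - i) := by rw [← pow_add]; congr 1; omega
  rw [hj, mul_assoc] at h
  have h2 : y = b ^ (j - i) * z := Nat.eq_of_mul_eq_mul_left hbp h
  rcases Nat.eq_or_lt_of_le hij with heq | hlt
  · subst heq; simpa using h2
  · exfalso
    exact hy ⟨b ^ (j - i - 1) * z, by rw [h2, ← mul_assoc, ← pow_succ']; congr 2; omega⟩

lemma subpow_unique (b : ℕ) (hb : 2 ≤ b) {i j y z : ℕ}
    (hy : ¬ b ∣ y) (hz : ¬ b ∣ z) (h : b ^ i * y = b ^ j * z) : i = j ∧ y = z := by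
  rcases le_total i j with hij | hij
  · exact subpow_unique_aux b hb hij hy hz h
  · obtain ⟨h1, h2⟩ := subpow_unique_aux b hb hij hz hy h.symm
    exact ⟨h1.symm, h2.symm⟩

lemma evensub_pos {b x : ℕ} (hb : 2 ≤ b) (h : IsEvenSubpower b x) : 0 < x := by
  obtain ⟨i, _, y, hy, _, rfl⟩ := h
  exact Nat.mul_pos (Nat.pow_pos (by omega)) hy

lemma evensub_mul_b (b : ℕ) (hb : 2 ≤ b) {x : ℕ} (hx : 0 < x) :
    IsEvenSubpower b (b * x) ↔ ¬ IsEvenSubpower b x := by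
  obtain ⟨j, z, hz, hbz, rfl⟩ := subpow_exists b hb x hx
  constructor
  · rintro ⟨i, hi, y, hy, hby, hxy⟩ ⟨i', hi', y', hy', hby', hxy'⟩
    have h1 : b ^ (j + 1) * z = b ^ i * y := by rw [← hxy, pow_succ]; ring
    have h2 := subpow_unique b hb (by simpa using hbz) hby h1
    obtain ⟨j', hj'⟩ := hi
    obtain ⟨j'', hj''⟩ := hi'
    have h3 := subpow_unique b hb hbz hby' hxy'
    omega
  · intro h
    have hj : ¬ Even j := fun he => h ⟨j, he, z, hz, hbz, rfl⟩
    exact ⟨j + 1, by simp [Nat.even_add_one, hj], z, hz, hbz, by rw [pow_succ]; ring⟩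

lemma card_recursion (b : ℕ) (hb : 2 ≤ b) (n : ℕ) :
    ((Finset.Icc 1 n).filter (IsEvenSubpower b)).card
      + ((Finset.Icc 1 (n / b)).filter (IsEvenSubpower b)).card = n := by
  have h2 : ((Finset.Icc 1 (n / b)).filter (IsEvenSubpower b)).card
      = ((Finset.Icc 1 n).filter (fun x => ¬ IsEvenSubpower b x)).card := by
    apply Finset.card_bij (fun z _ => b * z)
    · intro z hz
      simp only [Finset.mem_filter, Finset.mem_Icc] at hz ⊢
      obtain ⟨⟨h1z, h2z⟩, h3z⟩ := hz
      have hbz : z * b ≤ n := (Nat.le_div_iff_mul_le (by omega)).mp h2z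
      refine ⟨⟨by nlinarith, by linarith [hbz, Nat.mul_comm z b]⟩, ?_⟩
      intro h
      exact (evensub_mul_b b hb (by omega)).mp h h3z
    · intro z1 h1 z2 h2 heq
      exact Nat.eq_of_mul_eq_mul_left (by omega) heq
    · intro x hx
      simp only [Finset.mem_filter, Finset.mem_Icc] at hx
      obtain ⟨⟨h1x, h2x⟩, h3x⟩ := hx
      obtain ⟨j, z, hz, hbz, rfl⟩ := subpow_exists b hb x (by omega)
      have hj : ¬ Even j := fun he => h3x ⟨j, he, z, hz, hbz, rfl⟩
      have hj1 : 1 ≤ j := Nat.pos_of_ne_zero (by rintro rfl; exact hj Even.zero)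
      refine ⟨b ^ (j-1) * z, ?_, ?_⟩
      · simp only [Finset.mem_filter, Finset.mem_Icc]
        have hpos : 0 < b ^ (j-1) * z := Nat.mul_pos (Nat.pow_pos (by omega)) hz
        have hmul : b * (b ^ (j-1) * z) = b ^ j * z := by
          rw [← mul_assoc, ← pow_succ']; congr 2; omega
        refine ⟨⟨hpos, ?_⟩, ⟨j - 1, ?_, z, hz, hbz, rfl⟩⟩
        · rw [Nat.le_div_iff_mul_le (by omega : 0 < b), mul_comm, hmul]; exact h2x
        · obtain ⟨k, hk⟩ := Nat.not_even_iff_odd.mp hj; exact ⟨k, by omega⟩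
      · rw [← mul_assoc, ← pow_succ']; congr 2; omega
  rw [h2, Finset.card_filter_add_card_filter_not, Nat.card_Icc]; omega

noncomputable def Ecard (b n : ℕ) : ℕ := ((Finset.Icc 1 n).filter (IsEvenSubpower b)).card

lemma Ecard_bound (b : ℕ) (hb : 2 ≤ b) : ∀ n : ℕ,
    |(Ecard b n : ℝ) - n * ((b:ℝ)/((b:ℝ)+1))| ≤ Nat.log b n + 1 := by
  have hb1 : (0:ℝ) < (b:ℝ) + 1 := by positivity
  intro n
  induction n using Nat.strong_induction_on with
  | _ n ih =>
    rcases Nat.eq_zero_or_pos n with rfl | hn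
    · simp [Ecard]
    rcases lt_or_ge n b with hnb | hnb
    · -- small case: n < b, n/b = 0
      have hm : n / b = 0 := Nat.div_eq_of_lt hnb
      have hrec := card_recursion b hb n
      rw [hm] at hrec
      have hEn : Ecard b n = n := by unfold Ecard; simp at hrec ⊢; omega
      rw [hEn]
      have hid : (n:ℝ) - n * ((b:ℝ)/((b:ℝ)+1)) = n/((b:ℝ)+1) := by field_simp; ring
      rw [hid, abs_of_nonneg (by positivity)]
      have h1 : (n:ℝ) ≤ b := by exact_mod_cast hnb.le
      have h2 : (n:ℝ)/((b:ℝ)+1) ≤ 1 := by rw [div_le_one hb1]; linarith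
      have hlog : (0:ℝ) ≤ (Nat.log b n : ℝ) := by positivity
      linarith
    · set m := n / b with hmdef
      have hmn : m < n := Nat.div_lt_self hn (by omega)
      have hEm := ih m hmn
      have hrec := card_recursion b hb n
      have hcast : (Ecard b n : ℝ) = n - Ecard b m := by
        have h : Ecard b n + Ecard b m = n := hrec
        have := congrArg (fun k : ℕ => (k : ℝ)) h
        push_cast at this
        linarith
      have h5 : b * m + n % b = n := Nat.div_add_mod n b
      have h5r : (n:ℝ) = (b:ℝ) * m + (n % b : ℕ) := by exact_mod_cast h5.symm
      have key : (Ecard b n : ℝ) - n * ((b:ℝ)/((b:ℝ)+1))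
          = ((n % b : ℕ):ℝ)/((b:ℝ)+1) - ((Ecard b m : ℝ) - m * ((b:ℝ)/((b:ℝ)+1))) := by
        rw [hcast, h5r]; field_simp; ring
      have hr1 : ((n % b : ℕ):ℝ)/((b:ℝ)+1) ≤ 1 := by
        rw [div_le_one hb1]
        have : (n % b : ℕ) < b := Nat.mod_lt _ (by omega)
        have : ((n % b : ℕ):ℝ) < b := by exact_mod_cast this
        linarith
      have hr0 : (0:ℝ) ≤ ((n % b : ℕ):ℝ)/((b:ℝ)+1) := by positivity
      have habs : |(Ecard b n : ℝ) - n * ((b:ℝ)/((b:ℝ)+1))|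
          ≤ 1 + |(Ecard b m : ℝ) - m * ((b:ℝ)/((b:ℝ)+1))| := by
        rw [key]
        calc |((n % b : ℕ):ℝ)/((b:ℝ)+1) - ((Ecard b m : ℝ) - m * ((b:ℝ)/((b:ℝ)+1)))|
            ≤ |((n % b : ℕ):ℝ)/((b:ℝ)+1)| + |(Ecard b m : ℝ) - m * ((b:ℝ)/((b:ℝ)+1))| :=
              abs_sub _ _
          _ ≤ 1 + |(Ecard b m : ℝ) - m * ((b:ℝ)/((b:ℝ)+1))| := by
              rw [abs_of_nonneg hr0]; linarith
      have hlogm : Nat.log b m + 1 = Nat.log b n := by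
        have h1 : Nat.log b m = Nat.log b n - 1 := Nat.log_div_base b n
        have h2 : 0 < Nat.log b n := Nat.log_pos (by omega) hnb
        omega
      have hlogr : (Nat.log b m : ℝ) + 1 = (Nat.log b n : ℝ) := by exact_mod_cast hlogm
      linarith

lemma Ecard_tendsto (b : ℕ) (hb : 2 ≤ b) :
    Filter.Tendsto (fun n : ℕ => (Ecard b n : ℝ) / n) Filter.atTop
      (nhds ((b:ℝ)/((b:ℝ)+1))) := by
  have hlog2 : (0:ℝ) < Real.log 2 := Real.log_pos (by norm_num)
  have t1 : Filter.Tendsto (fun x : ℝ => Real.log x / x) Filter.atTop (nhds 0) :=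
    Real.isLittleO_log_id_atTop.tendsto_div_nhds_zero
  have t2 : Filter.Tendsto (fun n : ℕ => Real.log n / n) Filter.atTop (nhds 0) :=
    t1.comp tendsto_natCast_atTop_atTop
  have t3 : Filter.Tendsto (fun n : ℕ => (1:ℝ) / n) Filter.atTop (nhds 0) :=
    tendsto_one_div_atTop_nhds_zero_nat
  have t4 : Filter.Tendsto (fun n : ℕ => Real.log n / n * (1 / Real.log 2) + 1 / n)
      Filter.atTop (nhds 0) := by
    have := (t2.mul_const (1 / Real.log 2)).add t3
    simpa using this
  have hsq : Filter.Tendsto (fun n : ℕ => (Ecard b n : ℝ) / n - (b:ℝ)/((b:ℝ)+1))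
      Filter.atTop (nhds 0) := by
    apply squeeze_zero_norm' _ t4
    filter_upwards [Filter.eventually_ge_atTop 1] with n hn
    have hn0 : (0:ℝ) < n := by exact_mod_cast hn
    have hbd : |(Ecard b n : ℝ) - n * ((b:ℝ)/((b:ℝ)+1))| ≤ Nat.log b n + 1 :=
      Ecard_bound b hb n
    have heq : (Ecard b n : ℝ)/n - (b:ℝ)/((b:ℝ)+1)
        = ((Ecard b n : ℝ) - n * ((b:ℝ)/((b:ℝ)+1)))/n := by
      rw [sub_div]
      congr 1
      rw [mul_comm, mul_div_assoc, div_self hn0.ne', mul_one]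
    have hL : (Nat.log b n : ℝ) ≤ Real.log n / Real.log 2 := by
      have h1 : (2:ℕ) ^ Nat.log b n ≤ b ^ Nat.log b n := Nat.pow_le_pow_left hb _
      have h2 : b ^ Nat.log b n ≤ n := Nat.pow_log_le_self b (by omega)
      have h3 : ((2:ℝ)) ^ (Nat.log b n) ≤ (n:ℝ) := by exact_mod_cast le_trans h1 h2
      have h4 := Real.log_le_log (by positivity) h3
      rw [Real.log_pow] at h4
      exact (le_div_iff₀ hlog2).mpr h4
    rw [Real.norm_eq_abs, heq, abs_div, abs_of_pos hn0]
    calc |(Ecard b n : ℝ) - n * ((b:ℝ)/((b:ℝ)+1))| / n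
        ≤ ((Nat.log b n : ℝ) + 1) / n := by gcongr
      _ ≤ (Real.log n / Real.log 2 + 1) / n := by gcongr
      _ = Real.log n / n * (1 / Real.log 2) + 1 / n := by
          field_simp
  have := hsq.add_const ((b:ℝ)/((b:ℝ)+1))
  simpa using this

lemma odd_decomp (b : ℕ) (hb : 2 ≤ b) {x : ℕ} (hx : 0 < x) (hev : ¬ IsEvenSubpower b x) :
    ∃ j z, 1 ≤ j ∧ Even (j - 1) ∧ 0 < z ∧ ¬ b ∣ z ∧ x = b ^ j * z := by
  obtain ⟨j, z, hz, hbz, rfl⟩ := subpow_exists b hb x hx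
  have hj : ¬ Even j := fun he => hev ⟨j, he, z, hz, hbz, rfl⟩
  obtain ⟨k, hk⟩ := Nat.not_even_iff_odd.mp hj
  exact ⟨j, z, by omega, ⟨k, by omega⟩, hz, hbz, rfl⟩

lemma card_le_E (A : Set ℕ) (b : ℕ) (hb : 2 ≤ b) (a : ℕ) (ha : a ∈ A)
    (hco : Nat.Coprime a b) (hab : a < b) (S : Set ℕ) (hS : MulSidonSets A {b} S) (n : ℕ) :
    ((Finset.Icc 1 n).filter (· ∈ S)).card ≤ Ecard b n := by
  have ha0 : 0 < a := by
    rcases Nat.eq_zero_or_pos a with rfl | h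
    · have := Nat.coprime_zero_left b |>.mp hco; omega
    · exact h
  have hbmem : b ∈ ({b} : Set ℕ) := rfl
  -- key fact about the image of non-even-subpower elements
  have hkey : ∀ x : ℕ, 0 < x → ¬ IsEvenSubpower b x →
      b ∣ x ∧ IsEvenSubpower b (a * (x / b)) ∧ a * (x / b) ≤ x := by
    intro x hx hev
    obtain ⟨j, z, hj1, hje, hz, hbz, rfl⟩ := odd_decomp b hb hx hev
    have hbj : b ^ j = b * b ^ (j - 1) := by rw [← pow_succ']; congr 1; omega
    have hdvd : b ∣ b ^ j * z := ⟨b ^ (j-1) * z, by rw [hbj]; ring⟩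
    have hdiv : (b ^ j * z) / b = b ^ (j-1) * z := by
      rw [hbj, mul_assoc, Nat.mul_div_cancel_left _ (by omega : 0 < b)]
    refine ⟨hdvd, ?_, ?_⟩
    · rw [hdiv]
      refine ⟨j - 1, hje, a * z, by positivity, ?_, by ring⟩
      intro hd
      exact hbz (hco.symm.dvd_of_dvd_mul_left hd)
    · rw [hdiv]
      calc a * (b ^ (j-1) * z) ≤ b * (b ^ (j-1) * z) :=
            Nat.mul_le_mul_right _ (le_of_lt hab)
        _ = b ^ j * z := by rw [hbj]; ring
  apply Finset.card_le_card_of_injOn (fun x => if IsEvenSubpower b x then x else a * (x / b))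
  · intro x hx
    simp only [Finset.coe_filter, Finset.mem_coe, Finset.mem_filter, Finset.mem_Icc, Set.mem_setOf_eq] at hx
    obtain ⟨⟨h1x, h2x⟩, hxS⟩ := hx
    by_cases hev : IsEvenSubpower b x
    · simp only [if_pos hev]
      simp only [Ecard, Finset.coe_filter, Finset.mem_coe, Finset.mem_filter, Finset.mem_Icc, Set.mem_setOf_eq]
      exact ⟨⟨h1x, h2x⟩, hev⟩
    · obtain ⟨hdvd, hev', hle⟩ := hkey x (by omega) hev
      simp only [if_neg hev]
      simp only [Ecard, Finset.coe_filter, Finset.mem_coe, Finset.mem_filter, Finset.mem_Icc, Set.mem_setOf_eq]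
      exact ⟨⟨evensub_pos hb hev', le_trans hle h2x⟩, hev'⟩
  · intro x hx y hy hfeq
    simp only [Finset.coe_filter, Finset.mem_Icc, Set.mem_setOf_eq] at hx hy
    obtain ⟨⟨h1x, h2x⟩, hxS⟩ := hx
    obtain ⟨⟨h1y, h2y⟩, hyS⟩ := hy
    replace hfeq : (if IsEvenSubpower b x then x else a * (x / b))
        = (if IsEvenSubpower b y then y else a * (y / b)) := hfeq
    by_cases hevx : IsEvenSubpower b x <;> by_cases hevy : IsEvenSubpower b y
    · simpa [hevx, hevy] using hfeq
    · exfalso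
      obtain ⟨hdvd, hev', _⟩ := hkey y (by omega) hevy
      rw [if_pos hevx, if_neg hevy] at hfeq
      -- x = a * (y / b), so a * y = b * x
      have hay : a * y = b * x := by
        rw [hfeq]
        obtain ⟨w, rfl⟩ := hdvd
        rw [Nat.mul_div_cancel_left _ (by omega : 0 < b)]
        ring
      have := hS a ha b hbmem y hyS x hxS hay
      omega
    · exfalso
      obtain ⟨hdvd, hev', _⟩ := hkey x (by omega) hevx
      rw [if_neg hevx, if_pos hevy] at hfeq
      have hay : a * x = b * y := by
        rw [← hfeq]
        obtain ⟨w, rfl⟩ := hdvd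
        rw [Nat.mul_div_cancel_left _ (by omega : 0 < b)]
        ring
      have := hS a ha b hbmem x hxS y hyS hay
      omega
    · rw [if_neg hevx, if_neg hevy] at hfeq
      obtain ⟨hdx, _, _⟩ := hkey x (by omega) hevx
      obtain ⟨hdy, _, _⟩ := hkey y (by omega) hevy
      have h1 : x / b = y / b := Nat.eq_of_mul_eq_mul_left ha0 hfeq
      obtain ⟨u, rfl⟩ := hdx
      obtain ⟨v, rfl⟩ := hdy
      rw [Nat.mul_div_cancel_left _ (by omega : 0 < b),
        Nat.mul_div_cancel_left _ (by omega : 0 < b)] at h1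
      rw [h1]

theorem stmt9 (A : Set ℕ) (b : ℕ) (hb : 2 ≤ b) (hA : ∀ a ∈ A, Nat.Coprime a b) :
    MulSidonSets A {b} {x | IsEvenSubpower b x} ∧
    Filter.Tendsto
      (fun n : ℕ => (((Finset.Icc 1 n).filter (IsEvenSubpower b)).card : ℝ) / n)
      Filter.atTop (nhds ((b : ℝ) / ((b : ℝ) + 1))) ∧
    ((∃ a ∈ A, a < b) → ∀ S : Set ℕ, MulSidonSets A {b} S →
      Filter.limsup
        (fun n : ℕ => (((Finset.Icc 1 n).filter (· ∈ S)).card : ℝ) / n)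
        Filter.atTop ≤ (b : ℝ) / ((b : ℝ) + 1)) := by
  have part1 : MulSidonSets A {b} {x | IsEvenSubpower b x} := by
    intro a ha b' hb' x hx y hy heq
    exfalso
    rw [Set.mem_singleton_iff] at hb'
    rw [hb'] at heq
    obtain ⟨i, hi, u, hu, hbu, rfl⟩ := hx
    obtain ⟨j, hj, v, hv, hbv, rfl⟩ := hy
    have hco : Nat.Coprime b a := (hA a ha).symm
    have h0 : b ^ i * (a * u) = b ^ (j + 1) * v := by
      calc b ^ i * (a * u) = a * (b ^ i * u) := by ring
        _ = b * (b ^ j * v) := heq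
        _ = b ^ (j + 1) * v := by rw [pow_succ]; ring
    rcases le_or_gt i j with hij | hij
    · have hpow : b ^ (j + 1) = b ^ i * b ^ (j + 1 - i) := by rw [← pow_add]; congr 1; omega
      rw [hpow, mul_assoc] at h0
      have h1 : a * u = b ^ (j + 1 - i) * v :=
        Nat.eq_of_mul_eq_mul_left (Nat.pow_pos (by omega)) h0
      have hd : b ∣ a * u := by
        have : b ∣ b ^ (j + 1 - i) := dvd_pow_self b (by omega)
        exact h1 ▸ this.mul_right v
      exact hbu (hco.dvd_of_dvd_mul_left hd)
    · have hij2 : j + 2 ≤ i := by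
        obtain ⟨p, hp⟩ := hi
        obtain ⟨q, hq⟩ := hj
        omega
      have hpow : b ^ i = b ^ (j + 1) * b ^ (i - j - 1) := by rw [← pow_add]; congr 1; omega
      rw [hpow, mul_assoc] at h0
      have h1 : b ^ (i - j - 1) * (a * u) = v :=
        Nat.eq_of_mul_eq_mul_left (Nat.pow_pos (by omega)) h0
      have hd : b ∣ v := by
        have : b ∣ b ^ (i - j - 1) := dvd_pow_self b (by omega)
        exact h1 ▸ this.mul_right (a * u)
      exact hbv hd
  refine ⟨part1, Ecard_tendsto b hb, ?_⟩
  rintro ⟨a, ha, hab⟩ S hS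
  have hle : ∀ n : ℕ, (((Finset.Icc 1 n).filter (· ∈ S)).card : ℝ) / n ≤ (Ecard b n : ℝ) / n := by
    intro n
    have hc : (((Finset.Icc 1 n).filter (· ∈ S)).card : ℝ) ≤ (Ecard b n : ℝ) := by
      exact_mod_cast card_le_E A b hb a ha (hA a ha) hab S hS n
    gcongr
  have hbdd : Filter.IsBoundedUnder (· ≤ ·) Filter.atTop
      (fun n : ℕ => (Ecard b n : ℝ) / n) := (Ecard_tendsto b hb).isBoundedUnder_le
  have hcobdd : Filter.IsCoboundedUnder (· ≤ ·) Filter.atTop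
      (fun n : ℕ => (((Finset.Icc 1 n).filter (· ∈ S)).card : ℝ) / n) := by
    apply Filter.IsBoundedUnder.isCoboundedUnder_le
    refine ⟨0, ?_⟩
    simp only [Filter.eventually_map, ge_iff_le]
    filter_upwards with n
    positivity
  calc Filter.limsup (fun n : ℕ => (((Finset.Icc 1 n).filter (· ∈ S)).card : ℝ) / n)
        Filter.atTop
      ≤ Filter.limsup (fun n : ℕ => (Ecard b n : ℝ) / n) Filter.atTop :=
        Filter.limsup_le_limsup (Filter.Eventually.of_forall hle) hcobdd hbdd
    _ = (b : ℝ) / ((b : ℝ) + 1) := (Ecard_tendsto b hb).limsup_eq
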